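/- Under the sensor setup and posterior definitions: (1) if Φ ⪯ Φ^f ⪯ Φ^t, Φ^{ts} ⪰ 0 and ΔQ ≺ 0, then Σ^f ⪯ Σ ⪯ Σ^t; (2) if Φ^t ⪯ Φ^f ⪯ Φ, Φ^{ts} ⪰ 0 and ΔQ ≻ 0, then Σ ⪯ Σ^t ⪯ Σ^f. (Theorem 6 of the paper.) -/

import Mathlib

open Matrix

variable {n : ℕ}

lemma smulPSD {c : ℝ} (hc : 0 ≤ c) {M : Matrix (Fin n) (Fin n) ℝ} (hM : M.PosSemidef) :
    (c • M).PosSemidef := by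
  constructor
  · unfold Matrix.IsHermitian
    rw [conjTranspose_smul, star_trivial, hM.1]
  · intro x
    exact (hM.smul hc).2 x

lemma sumPSD {N : ℕ} (f : Fin N → Matrix (Fin n) (Fin n) ℝ)
    (h : ∀ j, (f j).PosSemidef) : (∑ j, f j).PosSemidef :=
  Finset.sum_induction f _ (fun _ _ ha hb => ha.add hb) Matrix.PosSemidef.zero
    (fun j _ => h j)

lemma invSubInv {A B : Matrix (Fin n) (Fin n) ℝ} (hA : A.PosDef)
    (hBA : (B - A).PosSemidef) : (A⁻¹ - B⁻¹).PosSemidef := by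
  have hB : B.PosDef := by
    have := hA.add_posSemidef hBA
    simpa using this
  have hAd : IsUnit A.det := hA.det_pos.ne'.isUnit
  have hBd : IsUnit B.det := hB.det_pos.ne'.isUnit
  have hAH : A⁻¹ᴴ = A⁻¹ := hA.inv.1
  have hBH : B⁻¹ᴴ = B⁻¹ := hB.inv.1
  have key : A⁻¹ - B⁻¹ =
      (A⁻¹ - B⁻¹) * A * (A⁻¹ - B⁻¹)ᴴ + B⁻¹ * (B - A) * B⁻¹ᴴ := by
    rw [conjTranspose_sub, hAH, hBH]
    simp only [Matrix.sub_mul, Matrix.mul_sub, Matrix.mul_assoc,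
      Matrix.nonsing_inv_mul_cancel_left _ _ hAd,
      Matrix.nonsing_inv_mul_cancel_left _ _ hBd,
      Matrix.mul_nonsing_inv_cancel_left _ _ hAd,
      Matrix.mul_nonsing_inv_cancel_left _ _ hBd,
      Matrix.nonsing_inv_mul _ hAd, Matrix.nonsing_inv_mul _ hBd,
      Matrix.mul_nonsing_inv _ hAd, Matrix.mul_nonsing_inv _ hBd,
      Matrix.mul_one, Matrix.one_mul]
    abel
  rw [key]
  exact (hA.posSemidef.mul_mul_conjTranspose_same _).add
    (hBA.mul_mul_conjTranspose_same _)

theorem stmt16 {n N : ℕ} (hn : 1 ≤ n) (hN : 1 ≤ N)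
    (md : Fin N → ℕ) (hmd : ∀ j, 1 ≤ md j)
    (H : ∀ j, Matrix (Fin (md j)) (Fin n) ℝ)
    (R Ru : ∀ j, Matrix (Fin (md j)) (Fin (md j)) ℝ)
    (hRsymm : ∀ j, (R j).IsSymm) (hRusymm : ∀ j, (Ru j).IsSymm)
    (hR : ∀ j, (R j).PosDef) (hRu : ∀ j, (Ru j).PosDef)
    (a : Fin N → ℝ) (ha : ∀ j, 0 ≤ a j)
    (P dQ : Matrix (Fin n) (Fin n) ℝ) (hPsymm : P.IsSymm) (hP : P.PosDef)
    (hdQsymm : dQ.IsSymm)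
    (Pf : Matrix (Fin n) (Fin n) ℝ) (hPfdef : Pf = P + dQ) (hPf : Pf.PosDef)
    (Phif Phi Phit Phits : Matrix (Fin n) (Fin n) ℝ)
    (hPhif : Phif = ∑ j, a j • ((H j)ᵀ * (Ru j)⁻¹ * H j))
    (hPhi : Phi = ∑ j, a j • ((H j)ᵀ * (R j)⁻¹ * H j))
    (hPhit : Phit = ∑ j, (a j) ^ 2 • ((H j)ᵀ * (Ru j)⁻¹ * R j * (Ru j)⁻¹ * H j))
    (hPhits : Phits = ∑ j, ((a j) ^ 2 - a j) • ((H j)ᵀ * (Ru j)⁻¹ * R j * (Ru j)⁻¹ * H j))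
    (Sig Sigf Sigt : Matrix (Fin n) (Fin n) ℝ)
    (hSig : Sig = (P⁻¹ + Phi)⁻¹)
    (hSigf : Sigf = (Pf⁻¹ + Phif)⁻¹)
    (hSigt : Sigt = Sigf * Pf⁻¹ * P * Pf⁻¹ * Sigf + Sigf * Phit * Sigf) :
    ((Phif - Phi).PosSemidef → (Phit - Phif).PosSemidef → Phits.PosSemidef →
      (-dQ).PosDef →
      (Sig - Sigf).PosSemidef ∧ (Sigt - Sig).PosSemidef) ∧
    ((Phif - Phit).PosSemidef → (Phi - Phif).PosSemidef → Phits.PosSemidef →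
      dQ.PosDef →
      (Sigt - Sig).PosSemidef ∧ (Sigf - Sigt).PosSemidef) := by
  -- basic facts
  have hRd : ∀ j, IsUnit (R j).det := fun j => (hR j).det_pos.ne'.isUnit
  have hRud : ∀ j, IsUnit (Ru j).det := fun j => (hRu j).det_pos.ne'.isUnit
  have hPd : IsUnit P.det := hP.det_pos.ne'.isUnit
  have hPfd : IsUnit Pf.det := hPf.det_pos.ne'.isUnit
  -- PSD of the information matrices
  have hPhiPSD : Phi.PosSemidef := by
    rw [hPhi]
    refine sumPSD _ fun j => smulPSD (ha j) ?_
    rw [← conjTranspose_eq_transpose_of_trivial]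
    exact (hR j).inv.posSemidef.conjTranspose_mul_mul_same (H j)
  have hPhifPSD : Phif.PosSemidef := by
    rw [hPhif]
    refine sumPSD _ fun j => smulPSD (ha j) ?_
    rw [← conjTranspose_eq_transpose_of_trivial]
    exact (hRu j).inv.posSemidef.conjTranspose_mul_mul_same (H j)
  -- posterior information matrices
  have hA : (P⁻¹ + Phi).PosDef := hP.inv.add_posSemidef hPhiPSD
  have hAf : (Pf⁻¹ + Phif).PosDef := hPf.inv.add_posSemidef hPhifPSD
  have hAd : IsUnit (P⁻¹ + Phi).det := hA.det_pos.ne'.isUnit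
  have hAfd : IsUnit (Pf⁻¹ + Phif).det := hAf.det_pos.ne'.isUnit
  have hSigA : Sig * (P⁻¹ + Phi) = 1 := by rw [hSig]; exact Matrix.nonsing_inv_mul _ hAd
  have hASig : (P⁻¹ + Phi) * Sig = 1 := by rw [hSig]; exact Matrix.mul_nonsing_inv _ hAd
  have hSigfAf : Sigf * (Pf⁻¹ + Phif) = 1 := by
    rw [hSigf]; exact Matrix.nonsing_inv_mul _ hAfd
  have hAfSigf : (Pf⁻¹ + Phif) * Sigf = 1 := by
    rw [hSigf]; exact Matrix.mul_nonsing_inv _ hAfd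
  have hSigH : Sigᴴ = Sig := by rw [hSig]; exact hA.inv.1
  have hSigfH : Sigfᴴ = Sigf := by rw [hSigf]; exact hAf.inv.1
  have hPH : P⁻¹ᴴ = P⁻¹ := hP.inv.1
  have hPfH : Pf⁻¹ᴴ = Pf⁻¹ := hPf.inv.1
  have hRH : ∀ j, (R j)⁻¹ᴴ = (R j)⁻¹ := fun j => (hR j).inv.1
  have hSigT : Sigᵀ = Sig := by rw [← conjTranspose_eq_transpose_of_trivial]; exact hSigH
  have hSigfT : Sigfᵀ = Sigf := by rw [← conjTranspose_eq_transpose_of_trivial]; exact hSigfH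
  have hPT : P⁻¹ᵀ = P⁻¹ := by rw [← conjTranspose_eq_transpose_of_trivial]; exact hPH
  have hPfT : Pf⁻¹ᵀ = Pf⁻¹ := by rw [← conjTranspose_eq_transpose_of_trivial]; exact hPfH
  have hRT : ∀ j, (R j)⁻¹ᵀ = (R j)⁻¹ := fun j => by
    rw [← conjTranspose_eq_transpose_of_trivial]; exact (hR j).inv.1
  have hRuT : ∀ j, (Ru j)⁻¹ᵀ = (Ru j)⁻¹ := fun j => by
    rw [← conjTranspose_eq_transpose_of_trivial]; exact (hRu j).inv.1
  have hRuH : ∀ j, (Ru j)⁻¹ᴴ = (Ru j)⁻¹ := fun j => (hRu j).inv.1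
  -- the central claim: Sigt - Sig is PSD whenever Phits is PSD
  have hmain : Phits.PosSemidef → (Sigt - Sig).PosSemidef := by
    intro hts
    set B0 : Matrix (Fin n) (Fin n) ℝ := Sigf * Pf⁻¹ - Sig * P⁻¹ with hB0
    set D : ∀ j, Matrix (Fin n) (Fin (md j)) ℝ :=
      fun j => Sigf * (H j)ᵀ * (Ru j)⁻¹ - Sig * (H j)ᵀ * (R j)⁻¹ with hD
    have hB0H : B0ᴴ = Pf⁻¹ * Sigf - P⁻¹ * Sig := by
      simp [hB0, conjTranspose_sub, conjTranspose_mul, hSigT, hSigfT, hPT, hPfT,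
        conjTranspose_eq_transpose_of_trivial]
    have hDH : ∀ j, (D j)ᴴ = (Ru j)⁻¹ * (H j * Sigf) - (R j)⁻¹ * (H j * Sig) := by
      intro j
      simp [hD, conjTranspose_sub, conjTranspose_mul, hSigT, hSigfT, hRT j, hRuT j,
        conjTranspose_eq_transpose_of_trivial, Matrix.mul_assoc]
    -- cancellation helpers
    have c1 : Sigf * (Pf⁻¹ * Sig) + Sigf * (Phif * Sig) = Sig := by
      calc Sigf * (Pf⁻¹ * Sig) + Sigf * (Phif * Sig)
          = Sigf * ((Pf⁻¹ + Phif) * Sig) := by simp only [Matrix.add_mul, Matrix.mul_add]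
        _ = Sig := by rw [← Matrix.mul_assoc, hSigfAf, Matrix.one_mul]
    have c2 : Sig * (Pf⁻¹ * Sigf) + Sig * (Phif * Sigf) = Sig := by
      calc Sig * (Pf⁻¹ * Sigf) + Sig * (Phif * Sigf)
          = Sig * ((Pf⁻¹ + Phif) * Sigf) := by simp only [Matrix.add_mul, Matrix.mul_add]
        _ = Sig := by rw [hAfSigf, Matrix.mul_one]
    have c3 : Sig * (P⁻¹ * Sig) + Sig * (Phi * Sig) = Sig := by
      calc Sig * (P⁻¹ * Sig) + Sig * (Phi * Sig)
          = Sig * ((P⁻¹ + Phi) * Sig) := by simp only [Matrix.add_mul, Matrix.mul_add]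
        _ = Sig := by rw [hASig, Matrix.mul_one]
    -- expansion of the prior term
    have e1 : B0 * P * B0ᴴ =
        Sigf * (Pf⁻¹ * (P * (Pf⁻¹ * Sigf))) - Sigf * (Pf⁻¹ * Sig)
          - (Sig * (Pf⁻¹ * Sigf) - Sig * (P⁻¹ * Sig)) := by
      rw [hB0H, hB0]
      simp only [Matrix.sub_mul, Matrix.mul_sub, Matrix.mul_assoc,
        Matrix.mul_nonsing_inv_cancel_left _ _ hPd,
        Matrix.nonsing_inv_mul_cancel_left _ _ hPd]
      abel
    -- expansion of the measurement sum
    have hPhitts : Phit - Phits =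
        ∑ j, a j • ((H j)ᵀ * (Ru j)⁻¹ * R j * (Ru j)⁻¹ * H j) := by
      rw [hPhit, hPhits, ← Finset.sum_sub_distrib]
      refine Finset.sum_congr rfl fun j _ => ?_
      rw [← sub_smul]; ring_nf
    have e2 : (∑ j, a j • (D j * R j * (D j)ᴴ)) =
        Sigf * ((Phit - Phits) * Sigf) - Sigf * (Phif * Sig)
          - (Sig * (Phif * Sigf) - Sig * (Phi * Sig)) := by
      rw [hPhitts, hPhif, hPhi]
      simp only [Finset.mul_sum, Finset.sum_mul, ← Finset.sum_sub_distrib]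
      refine Finset.sum_congr rfl fun j _ => ?_
      rw [hDH j, hD]
      simp only [Matrix.sub_mul, Matrix.mul_sub, Matrix.mul_assoc,
        Matrix.mul_smul, Matrix.smul_mul, smul_sub,
        Matrix.mul_nonsing_inv_cancel_left _ _ (hRd j),
        Matrix.nonsing_inv_mul_cancel_left _ _ (hRd j)]
      abel
    -- the key identity
    have key : Sigt - Sig =
        B0 * P * B0ᴴ + (∑ j, a j • (D j * R j * (D j)ᴴ)) + Sigf * Phits * Sigfᴴ := by
      rw [e1, e2, hSigfH, hSigt]
      have c1' : Sigf * (Phif * Sig) = Sig - Sigf * (Pf⁻¹ * Sig) := eq_sub_of_add_eq' c1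
      have c2' : Sig * (Phif * Sigf) = Sig - Sig * (Pf⁻¹ * Sigf) := eq_sub_of_add_eq' c2
      have c3' : Sig * (Phi * Sig) = Sig - Sig * (P⁻¹ * Sig) := eq_sub_of_add_eq' c3
      rw [c1', c2', c3']
      simp only [Matrix.mul_sub, Matrix.sub_mul, Matrix.mul_assoc]
      abel
    rw [key]
    refine ((hP.posSemidef.mul_mul_conjTranspose_same B0).add
      (sumPSD _ fun j => smulPSD (ha j)
        ((hR j).posSemidef.mul_mul_conjTranspose_same (D j)))).add
      (hts.mul_mul_conjTranspose_same Sigf)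
  constructor
  · intro h1 h2 hts hdQ
    constructor
    · rw [hSig, hSigf]
      refine invSubInv hA ?_
      have hPinv : (Pf⁻¹ - P⁻¹).PosSemidef := by
        refine invSubInv hPf ?_
        have : P - Pf = -dQ := by rw [hPfdef]; abel
        rw [this]; exact hdQ.posSemidef
      have : Pf⁻¹ + Phif - (P⁻¹ + Phi) = (Pf⁻¹ - P⁻¹) + (Phif - Phi) := by abel
      rw [this]; exact hPinv.add h1
    · exact hmain hts
  · intro h1 h2 hts hdQ
    refine ⟨hmain hts, ?_⟩
    have key2 : Sigf - Sigt = Sigf * (Pf⁻¹ * dQ * Pf⁻¹ + (Phif - Phit)) * Sigfᴴ := by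
      rw [hSigfH, hSigt]
      have hdQeq : dQ = Pf - P := by rw [hPfdef]; abel
      rw [hdQeq]
      have cf : Sigf * (Pf⁻¹ * Sigf) + Sigf * (Phif * Sigf) = Sigf := by
        calc Sigf * (Pf⁻¹ * Sigf) + Sigf * (Phif * Sigf)
            = Sigf * ((Pf⁻¹ + Phif) * Sigf) := by simp only [Matrix.add_mul, Matrix.mul_add]
          _ = Sigf := by rw [hAfSigf, Matrix.mul_one]
      have cf' : Sigf * (Phif * Sigf) = Sigf - Sigf * (Pf⁻¹ * Sigf) := eq_sub_of_add_eq' cf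
      simp only [Matrix.mul_sub, Matrix.sub_mul, Matrix.mul_add, Matrix.add_mul,
        Matrix.mul_assoc, Matrix.nonsing_inv_mul_cancel_left _ _ hPfd,
        Matrix.mul_nonsing_inv_cancel_left _ _ hPfd, cf']
      abel
    rw [key2]
    refine Matrix.PosSemidef.mul_mul_conjTranspose_same ?_ Sigf
    refine Matrix.PosSemidef.add ?_ h1
    have := hdQ.posSemidef.mul_mul_conjTranspose_same Pf⁻¹
    rwa [hPfH] at this
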